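/- Let X be an integrable random variable with finite right endpoint x* = sup{x : F(x) < 1} and P(X = x*) = 0. Then for every τ ∈ (0,1) the τ-th expectile satisfies ξ_τ < x*, and ξ_τ → x* as τ → 1. -/
import Mathlib


open MeasureTheory Filter Topology

/-- If `X` is an integrable nondegenerate random variable with finite right
endpoint `x*` and `P(X = x*) = 0`, then the τ-th expectile `ξ_τ` satisfies `ξ_τ < x*` for
every `τ ∈ (0,1)`, and `ξ_τ → x*` as `τ → 1`. -/
theorem expectile_lt_endpoint_and_tendsto {Ω : Type*} [MeasurableSpace Ω] (μ : Measure Ω)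
    [IsProbabilityMeasure μ] (X : Ω → ℝ) (hXmeas : Measurable X) (hX : Integrable X μ)
    (hnd : ¬ ∃ c : ℝ, ∀ᵐ ω ∂μ, X ω = c)
    (xstar : ℝ)
    (hub : ∀ᵐ ω ∂μ, X ω ≤ xstar)
    (hend : ∀ y : ℝ, y < xstar → μ {ω | y < X ω} ≠ 0)
    (hatom : μ {ω | X ω = xstar} = 0)
    (ξ : ℝ → ℝ)
    (hξ : ∀ τ ∈ Set.Ioo (0 : ℝ) 1, ξ τ - ∫ ω, X ω ∂μ
        = ((2 * τ - 1) / (1 - τ)) * ∫ ω, (if ξ τ < X ω then X ω - ξ τ else 0) ∂μ) :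
    (∀ τ ∈ Set.Ioo (0 : ℝ) 1, ξ τ < xstar) ∧
      Tendsto ξ (nhdsWithin (1 : ℝ) (Set.Iio 1)) (nhds xstar) := by
  set m := ∫ ω, X ω ∂μ with hm
  have hlt : ∀ᵐ ω ∂μ, X ω < xstar := by
    have h0 : ∀ᵐ ω ∂μ, X ω ≠ xstar := by
      rw [ae_iff]
      simpa using hatom
    filter_upwards [hub, h0] with ω h1 h2
    exact lt_of_le_of_ne h1 h2
  have hint : ∀ t : ℝ, Integrable (fun ω => max (X ω - t) 0) μ :=
    fun t => (hX.sub (integrable_const t)).pos_part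
  have hiff : ∀ t : ℝ, (fun ω => if t < X ω then X ω - t else 0)
      = (fun ω => max (X ω - t) 0) := by
    intro t; funext ω
    rcases lt_or_ge t (X ω) with h | h
    · simp [h, max_eq_left (le_of_lt (sub_pos.mpr h))]
    · simp [not_lt.mpr h, max_eq_right (sub_nonpos.mpr h)]
  have hgpos : ∀ t, t < xstar → 0 < ∫ ω, max (X ω - t) 0 ∂μ := by
    intro t ht
    refine (integral_pos_iff_support_of_nonneg (f := fun ω => max (X ω - t) 0)
      (fun ω => le_max_right _ _) (hint t)).mpr ?_
    have hs : Function.support (fun ω => max (X ω - t) 0) = {ω | t < X ω} := by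
      ext ω
      simp only [Function.mem_support, Set.mem_setOf_eq]
      constructor
      · intro h
        by_contra hc
        push_neg at hc
        exact h (max_eq_right (sub_nonpos.mpr hc))
      · intro h
        rw [max_eq_left (le_of_lt (sub_pos.mpr h))]
        exact ne_of_gt (sub_pos.mpr h)
    rw [hs]
    exact pos_iff_ne_zero.mpr (hend t ht)
  have hmlt : m < xstar := by
    have h1 : m ≤ xstar := by
      calc m ≤ ∫ _, xstar ∂μ := integral_mono_ae hX (integrable_const _) hub
      _ = xstar := by simp
    rcases lt_or_eq_of_le h1 with h | h
    · exact h
    · exfalso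
      have hz : ∫ ω, (xstar - X ω) ∂μ = 0 := by
        rw [integral_sub (integrable_const _) hX]
        simp [← hm, ← h]
      have hnn : 0 ≤ᵐ[μ] fun ω => xstar - X ω := by
        filter_upwards [hub] with ω hω
        simpa using sub_nonneg.mpr hω
      have hae := (integral_eq_zero_iff_of_nonneg_ae hnn ((integrable_const _).sub hX)).mp hz
      apply hnd
      refine ⟨xstar, ?_⟩
      filter_upwards [hae] with ω hω
      have : xstar - X ω = 0 := hω
      linarith
  have part1 : ∀ τ ∈ Set.Ioo (0:ℝ) 1, ξ τ < xstar := by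
    intro τ hτ
    by_contra h
    push_neg at h
    have hz : ∫ ω, (if ξ τ < X ω then X ω - ξ τ else 0) ∂μ = 0 := by
      rw [hiff]
      have hae : (fun ω => max (X ω - ξ τ) 0) =ᵐ[μ] 0 := by
        filter_upwards [hlt] with ω hω
        have : X ω - ξ τ ≤ 0 := by linarith
        simp [max_eq_right this]
      rw [integral_congr_ae hae]
      simp
    have hid := hξ τ hτ
    rw [hz, mul_zero] at hid
    have : ξ τ = m := by linarith
    linarith
  refine ⟨part1, ?_⟩
  have hevIoo : ∀ᶠ τ in nhdsWithin (1:ℝ) (Set.Iio 1), τ ∈ Set.Ioo (0:ℝ) 1 := by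
    have h1 : ∀ᶠ τ in nhdsWithin (1:ℝ) (Set.Iio 1), (0:ℝ) < τ :=
      eventually_nhdsWithin_of_eventually_nhds (eventually_gt_nhds one_pos)
    have h2 : ∀ᶠ τ in nhdsWithin (1:ℝ) (Set.Iio 1), τ ∈ Set.Iio (1:ℝ) :=
      eventually_mem_nhdsWithin
    filter_upwards [h1, h2] with τ ha hb
    exact ⟨ha, hb⟩
  have key : ∀ y, m < y → y < xstar →
      ∀ᶠ τ in nhdsWithin (1:ℝ) (Set.Iio 1), y < ξ τ := by
    intro y hmy hyx
    set gy := ∫ ω, max (X ω - y) 0 ∂μ with hgy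
    have hgy0 : 0 < gy := hgpos y hyx
    set K := (y - m) / gy with hK
    have hK0 : 0 < K := div_pos (by linarith) hgy0
    have hKgy : K * gy = y - m := div_mul_cancel₀ _ (ne_of_gt hgy0)
    set a := (1 + K) / (2 + K) with ha
    have ha1 : a < 1 := by
      rw [div_lt_one (by linarith)]
      linarith
    have hev1 : ∀ᶠ τ in nhdsWithin (1:ℝ) (Set.Iio 1), a < τ :=
      eventually_nhdsWithin_of_eventually_nhds (eventually_gt_nhds ha1)
    filter_upwards [hev1, hevIoo] with τ h1 hτIoo
    by_contra hcon
    push_neg at hcon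
    have hτ1 : τ < 1 := hτIoo.2
    have hc : K < (2*τ - 1)/(1 - τ) := by
      rw [lt_div_iff₀ (by linarith)]
      have h2 := (div_lt_iff₀ (show (0:ℝ) < 2 + K by linarith)).mp h1
      nlinarith
    have hG : gy ≤ ∫ ω, max (X ω - ξ τ) 0 ∂μ := by
      apply integral_mono (hint y) (hint (ξ τ))
      intro ω
      exact max_le_max (by linarith) le_rfl
    have hid := hξ τ hτIoo
    rw [hiff] at hid
    have hcpos : 0 < (2*τ - 1)/(1 - τ) := lt_trans hK0 hc
    have e1 : (2*τ - 1)/(1 - τ) * gy ≤ (2*τ - 1)/(1 - τ) * ∫ ω, max (X ω - ξ τ) 0 ∂μ :=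
      mul_le_mul_of_nonneg_left hG (le_of_lt hcpos)
    have e2 : K * gy < (2*τ - 1)/(1 - τ) * gy := mul_lt_mul_of_pos_right hc hgy0
    linarith
  rw [Metric.tendsto_nhds]
  intro ε hε
  have hδ : 0 < min ε (xstar - m) := lt_min hε (by linarith)
  set y := xstar - min ε (xstar - m) / 2 with hy
  have hy1 : m < y := by
    have := min_le_right ε (xstar - m)
    simp only [hy]
    linarith
  have hy2 : y < xstar := by
    simp only [hy]; linarith
  have hy3 : xstar - ε < y := by
    have := min_le_left ε (xstar - m)
    simp only [hy]; linarith
  filter_upwards [key y hy1 hy2, hevIoo] with τ h1 h2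
  have h3 := part1 τ h2
  rw [Real.dist_eq, abs_lt]
  constructor <;> linarith
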